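/- arXiv:2405.03136 — 2 statements merged into one kernel-verified Lean document; each statement's English description precedes it below -/
import Mathlib

section
/- For every integer K \geq 1 and every real N > 0, the Bit Length Bounding gate count S_K^{blb}(N) = N/3 + \sum_{\kappa=1}^{K-1} N \cdot (2^{2^{\kappa}}(2^{\kappa}+1) - 2)/(2^{2^{\kappa+1}} - 1) satisfies S_K^{blb}(N) < 1.71 N. -/
lemma blb_lemA (k : ℕ) (hk : 4 ≤ k) : 3*k*(k+1) + 1 ≤ 4*2^k := by
  induction k with
  | zero => omega
  | succ n ih =>
    rcases Nat.lt_or_ge n 4 with h | h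
    · interval_cases n <;> simp_all
    · have hIH := ih h
      have h2 : 4 ≤ 2^n := by
        calc 4 = 2^2 := rfl
        _ ≤ 2^n := Nat.pow_le_pow_right (by norm_num) (by omega)
      have : 2^(n+1) = 2 * 2^n := by ring
      nlinarith [hIH, h2]

lemma blb_term_bound (κ : ℕ) (hκ : 1 ≤ κ) :
    ((2:ℝ) ^ 2 ^ κ * (2 ^ κ + 1) - 2) / ((2:ℝ) ^ 2 ^ (κ+1) - 1) ≤ (4/3) * (1/2)^κ := by
  have hden : (0:ℝ) < (2:ℝ) ^ 2 ^ (κ+1) - 1 := by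
    have : (1:ℝ) < 2 ^ 2^(κ+1) := by
      apply one_lt_pow₀ (by norm_num) (Nat.pos_of_ne_zero (by positivity)).ne'
    linarith
  rw [div_le_iff₀ hden]
  rcases Nat.lt_or_ge κ 2 with h | h
  · interval_cases κ
    norm_num
  · -- κ ≥ 2, so k := 2^κ ≥ 4
    set k := 2^κ with hkdef
    have hk4 : 4 ≤ k := by
      calc 4 = 2^2 := rfl
      _ ≤ 2^κ := Nat.pow_le_pow_right (by norm_num) h
    have hA := blb_lemA k hk4
    have hAR : (3:ℝ) * k * (k+1) + 1 ≤ 4 * 2^k := by exact_mod_cast hA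
    set a : ℝ := (2:ℝ)^κ with hadef
    set b : ℝ := (2:ℝ)^k with hbdef
    have hak : a = (k:ℝ) := by
      rw [hadef, hkdef]; push_cast; ring
    have ha : (0:ℝ) < a := by positivity
    have hb : (0:ℝ) < b := by positivity
    have hb4 : (4:ℝ) ≤ b := by
      rw [hbdef]
      calc (4:ℝ) = 2^2 := by norm_num
      _ ≤ 2^k := by apply pow_le_pow_right₀ (by norm_num) (by omega)
    have hAR' : 3 * a * (a+1) + 1 ≤ 4 * b := by rw [hak]; exact hAR
    have hexp : (2:ℝ) ^ 2^(κ+1) = b * b := by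
      rw [hbdef, ← pow_add, hkdef]
      congr 1
      omega
    rw [hexp]
    have h1 : (0:ℝ) ≤ (4*b - 1 - 3*a*(a+1)) * b := by
      apply mul_nonneg (by linarith) hb.le
    have hpow : (1/2:ℝ)^κ * a = 1 := by
      rw [hadef, ← mul_pow]; norm_num
    have haa : a = (2:ℝ)^κ := hadef
    -- goal: b*(a+1) - 2 ≤ 4/3 * (1/2)^κ * (b*b - 1)
    have key : 3 * a * (b*(a+1) - 2) ≤ 4 * (b*b - 1) := by nlinarith [h1, ha, hb4]
    have hinv : (1/2:ℝ)^κ = 1 / a := by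
      field_simp [hadef]
      exact hpow
    rw [hinv]
    have h3a : (0:ℝ) < 3 * a := by linarith
    have heq : 4/3 * (1/a) * (b*b-1) = (4*(b*b-1))/(3*a) := by field_simp
    rw [heq, le_div_iff₀ h3a]
    nlinarith [key]

lemma blb_geom_sum' (M : ℕ) : ∑ κ ∈ Finset.Icc 1 M, (1/2:ℝ)^κ = 1 - (1/2)^M := by
  induction M with
  | zero => simp
  | succ n ih =>
    rw [Finset.sum_Icc_succ_top (by omega), ih]
    ring

/-- Upper bound on the Bit Length Bounding gate count: `S_K^{blb}(N) < 1.71 N`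
for every `K ≥ 1` and every real `N > 0`. -/
theorem blb_gate_count_upper (K : ℕ) (hK : 1 ≤ K) (N : ℝ) (hN : 0 < N) :
    N / 3 + ∑ κ ∈ Finset.Icc 1 (K - 1),
        N * ((2 : ℝ) ^ 2 ^ κ * (2 ^ κ + 1) - 2) / ((2 : ℝ) ^ 2 ^ (κ + 1) - 1)
      < 1.71 * N := by
  have hsum : ∑ κ ∈ Finset.Icc 1 (K-1),
      N * ((2 : ℝ) ^ 2 ^ κ * (2 ^ κ + 1) - 2) / ((2 : ℝ) ^ 2 ^ (κ + 1) - 1)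
      ≤ ∑ κ ∈ Finset.Icc 1 (K-1), N * ((4/3) * (1/2)^κ) := by
    apply Finset.sum_le_sum
    intro κ hκ
    have h1 : 1 ≤ κ := (Finset.mem_Icc.mp hκ).1
    rw [mul_div_assoc]
    exact mul_le_mul_of_nonneg_left (blb_term_bound κ h1) hN.le
  have hgeom : ∑ κ ∈ Finset.Icc 1 (K-1), N * ((4/3) * (1/2)^κ)
      = N * (4/3) * (1 - (1/2)^(K-1)) := by
    calc ∑ κ ∈ Finset.Icc 1 (K-1), N * ((4/3) * (1/2)^κ)
        = N * (4/3) * ∑ κ ∈ Finset.Icc 1 (K-1), (1/2:ℝ)^κ := by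
          rw [Finset.mul_sum]; apply Finset.sum_congr rfl; intros; ring
      _ = N * (4/3) * (1 - (1/2)^(K-1)) := by rw [blb_geom_sum' (K-1)]
  have hp : (0:ℝ) < (1/2:ℝ)^(K-1) := by positivity
  nlinarith [hsum, hgeom, hp, hN]
end

section
/- For every integer K \geq 4 and every real N > 0, the Bit Length Bounding gate count S_K^{blb}(N) = N/3 + \sum_{\kappa=1}^{K-1} N \cdot (2^{2^{\kappa}}(2^{\kappa}+1) - 2)/(2^{2^{\kappa+1}} - 1) satisfies S_K^{blb}(N) > 1.29 N. -/
/-- Lower bound on the Bit Length Bounding gate count: `S_K^{blb}(N) > 1.29 N`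
for every `K ≥ 4` and every real `N > 0`. -/
theorem blb_gate_count_lower (K : ℕ) (hK : 4 ≤ K) (N : ℝ) (hN : 0 < N) :
    1.29 * N
      < N / 3 + ∑ κ ∈ Finset.Icc 1 (K - 1),
          N * ((2 : ℝ) ^ 2 ^ κ * (2 ^ κ + 1) - 2) / ((2 : ℝ) ^ 2 ^ (κ + 1) - 1) := by
  have hsub : Finset.Icc 1 3 ⊆ Finset.Icc 1 (K - 1) := by
    apply Finset.Icc_subset_Icc_right
    omega
  have hnonneg : ∀ κ ∈ Finset.Icc 1 (K - 1), κ ∉ Finset.Icc 1 3 →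
      0 ≤ N * ((2 : ℝ) ^ 2 ^ κ * (2 ^ κ + 1) - 2) / ((2 : ℝ) ^ 2 ^ (κ + 1) - 1) := by
    intro κ _ _
    apply div_nonneg
    · apply mul_nonneg hN.le
      have h1 : (2 : ℝ) ≤ (2 : ℝ) ^ 2 ^ κ := by
        calc (2:ℝ) = 2 ^ 1 := (pow_one 2).symm
        _ ≤ 2 ^ 2 ^ κ := by
          apply pow_le_pow_right₀ (by norm_num)
          exact Nat.one_le_two_pow
      have h2 : (1 : ℝ) ≤ (2 : ℝ) ^ κ := one_le_pow₀ (by norm_num)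
      nlinarith
    · have : (2 : ℝ) ≤ (2 : ℝ) ^ 2 ^ (κ + 1) := by
        calc (2:ℝ) = 2 ^ 1 := (pow_one 2).symm
        _ ≤ 2 ^ 2 ^ (κ + 1) := by
          apply pow_le_pow_right₀ (by norm_num)
          exact Nat.one_le_two_pow
      linarith
  have hle := Finset.sum_le_sum_of_subset_of_nonneg hsub hnonneg
  have hval : ∑ κ ∈ Finset.Icc 1 3,
      N * ((2 : ℝ) ^ 2 ^ κ * (2 ^ κ + 1) - 2) / ((2 : ℝ) ^ 2 ^ (κ + 1) - 1)
      = N * (2/3 + 78/255 + 2302/65535) := by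
    rw [show Finset.Icc 1 3 = {1, 2, 3} from rfl]
    simp [Finset.sum_insert, Finset.mem_insert]
    norm_num
    ring
  nlinarith [hle, hval]
end
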